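/- Let s be a positive integer, let r_1, …, r_s be positive integers, and let n_1 < n_2 < ⋯ < n_s be real numbers with n_1 ≥ 0 and, in case s ≥ 2, n_{s-1} ≤ n_s − 1. Set f(x) = (x − n_1)^{r_1} ⋯ (x − n_s)^{r_s}. If m is a real number with 0 ≤ m ≤ n_s − 1, then ρ((x − m)·f(x) − 1) < ρ(f(x) − 1). -/

import Mathlib

open Polynomial

/-- `rho p` is the maximum (supremum) of the moduli of the complex roots of the
real polynomial `p`. -/
noncomputable def rho (p : Polynomial ℝ) : ℝ :=
  sSup {t : ℝ | ∃ z : ℂ, (Polynomial.aeval z) p = 0 ∧ ‖z‖ = t}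

lemma rho_key {q : ℕ} (hq : 0 < q) (c : Fin q → ℝ) (k : Fin q → ℕ) (hk : ∀ i, 0 < k i)
    (N : ℝ) (hc0 : ∀ i, 0 ≤ c i) (hcN : ∀ i, c i ≤ N) (i0 : Fin q) (hi0 : c i0 = N) :
    ∃ β : ℝ, N < β ∧ (∏ i, (β - c i) ^ k i) = 1 ∧
      rho (∏ i : Fin q, (X - C (c i)) ^ k i - 1) = β := by
  have : Nonempty (Fin q) := ⟨⟨0, hq⟩⟩
  set F : ℝ → ℝ := fun t => ∏ i, (t - c i) ^ k i with hF
  have hFcont : Continuous F :=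
    continuous_finset_prod _ fun i _ => (continuous_id.sub continuous_const).pow _
  have hFN : F N = 0 := Finset.prod_eq_zero (Finset.mem_univ i0) (by
    simp [hi0, zero_pow (hk i0).ne'])
  have hF2 : 1 ≤ F (N + 2) := by
    show (1:ℝ) ≤ ∏ i, (N + 2 - c i) ^ k i
    calc (1:ℝ) = ∏ _i : Fin q, (1:ℝ) ^ 1 := by simp
    _ ≤ ∏ i, (N + 2 - c i) ^ k i := by
        apply Finset.prod_le_prod (fun i _ => by norm_num)
        intro i _
        calc (1:ℝ) ^ 1 = 1 ^ k i := by simp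
        _ ≤ (N + 2 - c i) ^ k i := pow_le_pow_left₀ zero_le_one (by linarith [hcN i]) _
  have hsub : Set.Icc (F N) (F (N+2)) ⊆ F '' Set.Icc N (N+2) :=
    intermediate_value_Icc (by linarith) hFcont.continuousOn
  obtain ⟨β, hβmem, hβ⟩ : ∃ β ∈ Set.Icc N (N+2), F β = 1 := by
    have h1 : (1:ℝ) ∈ Set.Icc (F N) (F (N+2)) := by rw [hFN]; exact ⟨zero_le_one, hF2⟩
    obtain ⟨β, hmem, hβ⟩ := hsub h1
    exact ⟨β, hmem, hβ⟩
  have hβN : N < β := by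
    rcases eq_or_lt_of_le hβmem.1 with h | h
    · exfalso; rw [← h] at hβ; rw [hFN] at hβ; norm_num at hβ
    · exact h
  have hN0 : 0 ≤ N := hi0 ▸ hc0 i0
  have hβ0 : 0 ≤ β := by linarith
  -- complex evaluation
  have haev : ∀ z : ℂ, (Polynomial.aeval z) (∏ i : Fin q, (X - C (c i)) ^ k i - 1)
      = ∏ i, (z - (c i : ℂ)) ^ k i - 1 := by
    intro z
    simp [map_sub, map_prod, map_pow]
  have hβroot : (Polynomial.aeval (β:ℂ)) (∏ i : Fin q, (X - C (c i)) ^ k i - 1) = 0 := by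
    rw [haev]
    have : ∏ i, ((β:ℂ) - (c i : ℂ)) ^ k i = ((F β : ℝ) : ℂ) := by
      rw [hF]; push_cast; ring_nf
    rw [this, hβ]
    simp
  have hβmemS : β ∈ {t : ℝ | ∃ z : ℂ, (Polynomial.aeval z) (∏ i : Fin q, (X - C (c i)) ^ k i - 1) = 0 ∧ ‖z‖ = t} :=
    ⟨(β:ℂ), hβroot, by rw [Complex.norm_real, Real.norm_eq_abs]; exact abs_of_nonneg hβ0⟩
  have hbound : ∀ t ∈ {t : ℝ | ∃ z : ℂ, (Polynomial.aeval z) (∏ i : Fin q, (X - C (c i)) ^ k i - 1) = 0 ∧ ‖z‖ = t}, t ≤ β := by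
    rintro t ⟨z, hz, rfl⟩
    by_contra hlt
    push_neg at hlt
    rw [haev, sub_eq_zero] at hz
    have habs : ∏ i, (‖z - (c i : ℂ)‖) ^ k i = 1 := by
      have := congrArg (‖·‖) hz
      rw [norm_prod, norm_one] at this
      simpa [norm_pow] using this
    have hzi : ∀ i, c i < ‖z‖ := fun i => lt_of_le_of_lt ((hcN i).trans hβN.le) hlt
    have h1 : F β < F ‖z‖ := by
      apply Finset.prod_lt_prod_of_nonempty
      · intro i _; exact pow_pos (by linarith [hcN i]) _
      · intro i _
        exact pow_lt_pow_left₀ (by linarith [hzi i]) (by linarith [hcN i]) (hk i).ne'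
      · exact Finset.univ_nonempty
    have h2 : F ‖z‖ ≤ ∏ i, (‖z - (c i : ℂ)‖) ^ k i := by
      apply Finset.prod_le_prod
      · intro i _; exact pow_nonneg (by linarith [hzi i]) _
      · intro i _
        apply pow_le_pow_left₀ (by linarith [hzi i])
        have := norm_add_le (z - (c i : ℂ)) (c i : ℂ)
        simp only [sub_add_cancel, Complex.norm_real, Real.norm_eq_abs] at this
        rw [abs_of_nonneg (hc0 i)] at this
        linarith
    rw [habs] at h2
    rw [hβ] at h1
    linarith
  refine ⟨β, hβN, hβ, ?_⟩
  unfold rho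
  exact le_antisymm (csSup_le ⟨β, hβmemS⟩ hbound) (le_csSup ⟨β, hbound⟩ hβmemS)

/-- With `f(x) = (x - n₁)^{r₁} ⋯ (x - n_s)^{r_s}` as before, if
`0 ≤ m ≤ n_s - 1`, then `ρ((x - m)·f(x) - 1) < ρ(f(x) - 1)`. -/
theorem statement2 (s : ℕ) (hs : 0 < s) (r : Fin s → ℕ) (hr : ∀ i, 0 < r i)
    (n : Fin s → ℝ) (hmono : StrictMono n) (hn0 : 0 ≤ n ⟨0, hs⟩)
    (hgap : ∀ _ : 2 ≤ s, n ⟨s - 2, by omega⟩ ≤ n ⟨s - 1, by omega⟩ - 1)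
    (m : ℝ) (hm0 : 0 ≤ m) (hm1 : m ≤ n ⟨s - 1, by omega⟩ - 1) :
    rho ((X - C m) * (∏ i : Fin s, (X - C (n i)) ^ r i) - 1) <
      rho (∏ i : Fin s, (X - C (n i)) ^ r i - 1) := by
  set N : ℝ := n ⟨s - 1, by omega⟩ with hN
  have hcN : ∀ i, n i ≤ N := fun i => hmono.monotone (by
    rw [Fin.le_def]; have := i.isLt; simp; omega)
  have hc0 : ∀ i, 0 ≤ n i := fun i => hn0.trans (hmono.monotone (by
    rw [Fin.le_def]; simp))
  -- β for f
  obtain ⟨β, hβN, hβ1, hβrho⟩ := rho_key hs n r hr N hc0 hcN ⟨s - 1, by omega⟩ rfl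
  -- α for g
  set c' : Fin (s + 1) → ℝ := Fin.cons m n with hc'
  set k' : Fin (s + 1) → ℕ := Fin.cons 1 r with hk'
  have hc'0 : ∀ i, 0 ≤ c' i := by
    intro i
    refine Fin.cases ?_ ?_ i
    · simpa [hc'] using hm0
    · intro j; simpa [hc'] using hc0 j
  have hc'N : ∀ i, c' i ≤ N := by
    intro i
    refine Fin.cases ?_ ?_ i
    · simp only [hc', Fin.cons_zero]; linarith
    · intro j; simpa [hc'] using hcN j
  have hk'pos : ∀ i, 0 < k' i := by
    intro i
    refine Fin.cases ?_ ?_ i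
    · simp [hk']
    · intro j; simpa [hk'] using hr j
  have hpoly : (X - C m) * (∏ i : Fin s, (X - C (n i)) ^ r i)
      = ∏ i : Fin (s + 1), (X - C (c' i)) ^ k' i := by
    rw [Fin.prod_univ_succ]
    simp [hc', hk', pow_one]
  obtain ⟨α, hαN, hα1, hαrho⟩ := rho_key (Nat.succ_pos s) c' k' hk'pos N hc'0 hc'N
    (Fin.succ ⟨s - 1, by omega⟩) (by rw [hc', Fin.cons_succ])
  rw [hpoly, hαrho, hβrho]
  -- now show α < β
  have hα1' : (α - m) * ∏ i : Fin s, (α - n i) ^ r i = 1 := by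
    rw [Fin.prod_univ_succ] at hα1
    simpa [hc', hk', pow_one] using hα1
  have hFα0 : 0 ≤ ∏ i : Fin s, (α - n i) ^ r i :=
    Finset.prod_nonneg fun i _ => pow_nonneg (by linarith [hcN i]) _
  have hαm : 1 < α - m := by linarith
  have hFαlt : ∏ i : Fin s, (α - n i) ^ r i < 1 := by nlinarith
  by_contra hle
  push_neg at hle
  have hmono2 : (∏ i : Fin s, (β - n i) ^ r i) ≤ ∏ i : Fin s, (α - n i) ^ r i := by
    apply Finset.prod_le_prod
    · intro i _; exact pow_nonneg (by linarith [hcN i]) _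
    · intro i _; exact pow_le_pow_left₀ (by linarith [hcN i]) (by linarith) _
  rw [hβ1] at hmono2
  linarith
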